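/- arXiv:1506.07431 — 2 statements merged into one kernel-verified Lean document; each statement's English description precedes it below -/
import Mathlib

section
/- Let 𝒥 : E → E* be a bounded linear map that is symmetric, i.e. (𝒥x)(y) = (𝒥y)(x) for all x, y ∈ E. For every s ≤ 0 and t ∈ [0,1], the subspace β(s,t) = {(x, t·φ + s·𝒥x, t·x, φ) : x ∈ E, φ ∈ E*} is a Lagrangian subspace of (ℋ⊞, ω⊞): ω⊞ vanishes identically on β(s,t) × β(s,t), and every z ∈ ℋ⊞ satisfying ω⊞(z, w) = 0 for all w ∈ β(s,t) belongs to β(s,t). -/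
noncomputable section

/-- The symplectic form `ω` on `ℋ = E × E*`, `ω((x,φ),(y,ψ)) = ψ(x) − φ(y)`. -/
def omegaH {E : Type*} [NormedAddCommGroup E] [InnerProductSpace ℝ E]
    (p q : E × StrongDual ℝ E) : ℝ := q.2 p.1 - p.2 q.1

/-- The symplectic form `ω⊞ = ω ⊕ (−ω)` on the doubled space `ℋ⊞ = ℋ × ℋ`. -/
def omegaBp {E : Type*} [NormedAddCommGroup E] [InnerProductSpace ℝ E]
    (z w : (E × StrongDual ℝ E) × (E × StrongDual ℝ E)) : ℝ :=
  omegaH z.1 w.1 - omegaH z.2 w.2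

/-- The two-parameter family of subspaces `β(s,t) = {(x, t·φ + s·𝒥x, t·x, φ)}` of `ℋ⊞`. -/
def betaSet {E : Type*} [NormedAddCommGroup E] [InnerProductSpace ℝ E]
    (J : E →L[ℝ] StrongDual ℝ E) (s t : ℝ) :
    Set ((E × StrongDual ℝ E) × (E × StrongDual ℝ E)) :=
  {z | ∃ (x : E) (φ : StrongDual ℝ E), z = ((x, t • φ + s • J x), (t • x, φ))}

/-- For a bounded symmetric `𝒥 : E → E*`, every `s ≤ 0` and every `t ∈ [0,1]`, the subspace
`β(s,t) = {(x, t·φ + s·𝒥x, t·x, φ)}` is Lagrangian in `(ℋ⊞, ω⊞)`. -/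
theorem stmt5 {E : Type*} [NormedAddCommGroup E] [InnerProductSpace ℝ E] [CompleteSpace E]
    (J : E →L[ℝ] StrongDual ℝ E) (hJ : ∀ x y : E, J x y = J y x) :
    ∀ s ≤ (0 : ℝ), ∀ t ∈ Set.Icc (0 : ℝ) 1,
      (∀ z ∈ betaSet J s t, ∀ w ∈ betaSet J s t, omegaBp z w = 0) ∧
      (∀ z : (E × StrongDual ℝ E) × (E × StrongDual ℝ E),
        (∀ w ∈ betaSet J s t, omegaBp z w = 0) → z ∈ betaSet J s t) := by
  intro s _hs t _ht
  constructor
  · rintro z ⟨x, φ, rfl⟩ w ⟨y, ψ, rfl⟩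
    simp only [omegaBp, omegaH, ContinuousLinearMap.add_apply,
      ContinuousLinearMap.smul_apply, map_smul, smul_eq_mul]
    have := hJ x y
    ring_nf
    nlinarith [hJ x y]
  · rintro ⟨⟨a, α⟩, ⟨b, β⟩⟩ hz
    have key : ∀ (x : E) (φ : StrongDual ℝ E),
        t * φ a + s * (J x) a - α x - (φ b - t * β x) = 0 := by
      intro x φ
      have := hz ((x, t • φ + s • J x), (t • x, φ)) ⟨x, φ, rfl⟩
      simpa [omegaBp, omegaH, ContinuousLinearMap.add_apply,
        ContinuousLinearMap.smul_apply, map_smul, smul_eq_mul] using this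
    have hb : b = t • a := by
      have h1 : ∀ φ : StrongDual ℝ E, φ (t • a - b) = 0 := by
        intro φ
        have := key 0 φ
        simp only [map_zero, ContinuousLinearMap.zero_apply, mul_zero, sub_zero, zero_sub] at this
        have : t * φ a - φ b = 0 := by linarith
        simpa [map_sub, map_smul, smul_eq_mul, sub_eq_zero] using this
      have h2 := h1 (innerSL ℝ (t • a - b))
      simp only [innerSL_apply_apply, real_inner_self_eq_norm_sq] at h2
      have : t • a - b = 0 := by
        rw [← norm_eq_zero]
        nlinarith [norm_nonneg (t • a - b)]
      linear_combination (norm := abel) -this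
    have hα : α = t • β + s • J a := by
      ext x
      have := key x 0
      simp only [ContinuousLinearMap.zero_apply, map_zero, mul_zero, zero_add, zero_sub] at this
      simp only [ContinuousLinearMap.add_apply, ContinuousLinearMap.smul_apply, smul_eq_mul]
      rw [hJ a x]
      linarith
    exact ⟨a, β, by rw [hb, hα]⟩
end
end

section
/- Equip the dual E* of a real Hilbert space E with the inner product transported from E by the Riesz isometry, and give ℋ⊞ = E × E* × E × E* the product Hilbert structure. Let 𝒥 : E → E* be a bounded symmetric linear map ((𝒥x)(y) = (𝒥y)(x) for all x, y) and 𝒥† : E* → E its Hilbert-space adjoint. Then for every s ≤ 0 and t ∈ [0,1], the orthogonal complement of β(s,t) = {(x, t·φ + s·𝒥x, t·x, φ) : x ∈ E, φ ∈ E*} in ℋ⊞ equals {(−t·y − s·𝒥†ψ, ψ, y, −t·ψ) : y ∈ E, ψ ∈ E*}. -/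
open RealInnerProductSpace

noncomputable section

/-- The inner product on `E*` transported from `E` by the Riesz isometry. -/
def dualInner {E : Type*} [NormedAddCommGroup E] [InnerProductSpace ℝ E] [CompleteSpace E]
    (φ ψ : StrongDual ℝ E) : ℝ :=
  ⟪(InnerProductSpace.toDual ℝ E).symm φ, (InnerProductSpace.toDual ℝ E).symm ψ⟫

/-- The product Hilbert inner product on `ℋ⊞ = E × E* × E × E*`, with `E*` carrying the
inner product transported from `E` by the Riesz isometry. -/
def boxInner {E : Type*} [NormedAddCommGroup E] [InnerProductSpace ℝ E] [CompleteSpace E]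
    (z w : (E × StrongDual ℝ E) × (E × StrongDual ℝ E)) : ℝ :=
  ⟪z.1.1, w.1.1⟫ + dualInner z.1.2 w.1.2 + ⟪z.2.1, w.2.1⟫ + dualInner z.2.2 w.2.2

section Aux

variable {E : Type*} [NormedAddCommGroup E] [InnerProductSpace ℝ E] [CompleteSpace E]

lemma dualInner_comm (φ ψ : StrongDual ℝ E) : dualInner φ ψ = dualInner ψ φ :=
  real_inner_comm _ _

lemma dualInner_add_right (χ φ ψ : StrongDual ℝ E) :
    dualInner χ (φ + ψ) = dualInner χ φ + dualInner χ ψ := by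
  simp [dualInner, inner_add_right]

lemma dualInner_smul_right (r : ℝ) (χ φ : StrongDual ℝ E) :
    dualInner χ (r • φ) = r * dualInner χ φ := by
  simp [dualInner, real_inner_smul_right]

lemma dualInner_smul_left (r : ℝ) (χ φ : StrongDual ℝ E) :
    dualInner (r • χ) φ = r * dualInner χ φ := by
  simp [dualInner, real_inner_smul_left]

lemma dualInner_zero_right (χ : StrongDual ℝ E) : dualInner χ 0 = 0 := by
  simp [dualInner]

lemma dualInner_neg_left (χ φ : StrongDual ℝ E) :
    dualInner (-χ) φ = -dualInner χ φ := by
  simp [dualInner, inner_neg_left]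

lemma dualInner_self_eq_zero {χ : StrongDual ℝ E} (h : dualInner χ χ = 0) : χ = 0 := by
  have : (InnerProductSpace.toDual ℝ E).symm χ = 0 := by
    simpa [dualInner] using inner_self_eq_zero.mp h
  simpa using congrArg (InnerProductSpace.toDual ℝ E) this

end Aux

/-- For a bounded symmetric `𝒥 : E → E*` with Hilbert-space adjoint `𝒥† : E* → E`
(with respect to the transported inner product on `E*`), and every `s ≤ 0`, `t ∈ [0,1]`,
the orthogonal complement of `β(s,t)` in `ℋ⊞` is `{(−t·y − s·𝒥†ψ, ψ, y, −t·ψ)}`. -/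
theorem stmt6 {E : Type*} [NormedAddCommGroup E] [InnerProductSpace ℝ E] [CompleteSpace E]
    (J : E →L[ℝ] StrongDual ℝ E) (hJ : ∀ x y : E, J x y = J y x)
    (Jd : StrongDual ℝ E →L[ℝ] E)
    (hJd : ∀ (x : E) (ψ : StrongDual ℝ E), dualInner (J x) ψ = ⟪x, Jd ψ⟫) :
    ∀ s ≤ (0 : ℝ), ∀ t ∈ Set.Icc (0 : ℝ) 1,
      {z : (E × StrongDual ℝ E) × (E × StrongDual ℝ E) |
          ∀ w ∈ betaSet J s t, boxInner z w = 0}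
        = {z | ∃ (y : E) (ψ : StrongDual ℝ E),
            z = ((-(t • y) - s • Jd ψ, ψ), (y, -(t • ψ)))} := by
  intro s _hs t _ht
  ext z
  obtain ⟨⟨a, φ'⟩, b, ψ'⟩ := z
  simp only [Set.mem_setOf_eq]
  constructor
  · intro h
    -- key evaluation of orthogonality on a generator
    have key : ∀ (x : E) (φ : StrongDual ℝ E),
        ⟪a, x⟫ + (t * dualInner φ' φ + s * dualInner φ' (J x))
          + t * ⟪b, x⟫ + dualInner ψ' φ = 0 := by
      intro x φ
      have := h ((x, t • φ + s • J x), (t • x, φ)) ⟨x, φ, rfl⟩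
      simpa [boxInner, dualInner_add_right, dualInner_smul_right,
        real_inner_smul_right] using this
    -- ψ' = -(t • φ')
    have hψ : ψ' = -(t • φ') := by
      have h1 : ∀ φ : StrongDual ℝ E, dualInner (t • φ' + ψ') φ = 0 := by
        intro φ
        have := key 0 φ
        have h0 : dualInner (t • φ' + ψ') φ
            = t * dualInner φ' φ + dualInner ψ' φ := by
          rw [dualInner_comm, dualInner_add_right, dualInner_smul_right,
            dualInner_comm φ φ', dualInner_comm φ ψ']
        rw [h0]
        simpa [map_zero, dualInner_zero_right] using this
      have := dualInner_self_eq_zero (h1 (t • φ' + ψ'))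
      have : ψ' = -(t • φ') := by linear_combination (norm := abel) this
      exact this
    -- a = -(t • b) - s • Jd φ'
    have ha : a = -(t • b) - s • Jd φ' := by
      have h1 : ∀ x : E, ⟪a + t • b + s • Jd φ', x⟫ = 0 := by
        intro x
        have := key x 0
        have hJx : dualInner φ' (J x) = ⟪Jd φ', x⟫ := by
          rw [dualInner_comm, hJd x φ', real_inner_comm]
        rw [hJx] at this
        have : ⟪a, x⟫ + s * ⟪Jd φ', x⟫ + t * ⟪b, x⟫ = 0 := by
          simpa [dualInner_zero_right] using this
        simpa [inner_add_left, real_inner_smul_left] using by linarith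
      have h0 : a + t • b + s • Jd φ' = 0 :=
        inner_self_eq_zero.mp (h1 (a + t • b + s • Jd φ'))
      have : a = -(t • b) - s • Jd φ' := by
        have := h0
        abel_nf at this ⊢
        linear_combination (norm := abel) this
      exact this
    exact ⟨b, φ', by rw [ha, hψ]⟩
  · rintro ⟨y, ψ, hz⟩
    rw [hz]
    rintro w ⟨x, φ, rfl⟩
    have hJx : dualInner ψ (J x) = ⟪Jd ψ, x⟫ := by
      rw [dualInner_comm, hJd x ψ, real_inner_comm]
    simp only [boxInner, dualInner_add_right, dualInner_smul_right, real_inner_smul_right,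
      inner_sub_left, inner_neg_left, real_inner_smul_left, dualInner_neg_left, dualInner_smul_left, hJx]
    ring
end
end
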